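/- Let m > k ≥ 2 be integers, let n be an integer, and for 1 ≤ i ≤ k−1 define the rational numbers U_{m,k,i} = (k−1)·C(m,i)/C(k−1,i) and b(n,k,m,i) = n·i − (k−i)(U_{m,k,i} − n)/(m−k+1). Then for every integer i with 1 ≤ i ≤ k−2, b(n,k,m,i) − b(n,k,m,i+1) = (m−k)(U_{m,k,i} − n)/(m−k+1). Consequently, if c with 1 ≤ c ≤ k−1 is least such that n ≤ U_{m,k,c}, then b(n,k,m,i) is maximized over 1 ≤ i ≤ k−1 at i = c. -/

import Mathlib

/-- `batchU m k i` is the rational number `U_{m,k,i} = (k-1)·C(m,i)/C(k-1,i)`. -/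
def batchU (m k i : ℕ) : ℚ :=
  ((k : ℚ) - 1) * (Nat.choose m i : ℚ) / (Nat.choose (k - 1) i : ℚ)

/-- `batchB n k m i = b(n,k,m,i) = n·i - (k-i)(U_{m,k,i} - n)/(m-k+1)`, the family of
lower-bound estimates for the minimum total storage of an (n,N,k,m)-CBC. -/
def batchB (n : ℤ) (k m i : ℕ) : ℚ :=
  (n : ℚ) * i - ((k : ℚ) - i) * (batchU m k i - n) / ((m : ℚ) - k + 1)

lemma batchU_rel (k m : ℕ) (hk : 2 ≤ k) (hkm : k < m) (i : ℕ) (hi : i ≤ k - 2) :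
    ((k:ℚ) - 1 - i) * batchU m k (i+1) = ((m:ℚ) - i) * batchU m k i := by
  have him : i ≤ m := by omega
  have hk1 : ((k - 1 : ℕ) : ℚ) = (k:ℚ) - 1 := by
    rw [Nat.cast_sub (by omega)]; norm_num
  have h1 : (Nat.choose m (i+1) : ℚ) * (i+1) = (Nat.choose m i : ℚ) * ((m:ℚ) - i) := by
    have h := congrArg (Nat.cast : ℕ → ℚ) (Nat.choose_succ_right_eq m i)
    push_cast at h
    rwa [Nat.cast_sub him] at h
  have h2 : (Nat.choose (k-1) (i+1) : ℚ) * (i+1) = (Nat.choose (k-1) i : ℚ) * ((k:ℚ) - 1 - i) := by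
    have h := congrArg (Nat.cast : ℕ → ℚ) (Nat.choose_succ_right_eq (k-1) i)
    push_cast at h
    rwa [Nat.cast_sub (by omega : i ≤ k - 1), hk1] at h
  have hb : (Nat.choose (k-1) i : ℚ) ≠ 0 := by
    exact_mod_cast (Nat.choose_pos (by omega : i ≤ k - 1)).ne'
  have hb' : (Nat.choose (k-1) (i+1) : ℚ) ≠ 0 := by
    exact_mod_cast (Nat.choose_pos (by omega : i + 1 ≤ k - 1)).ne'
  have hi1 : ((i:ℚ) + 1) ≠ 0 := by positivity
  apply mul_right_cancel₀ hi1
  unfold batchU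
  field_simp
  apply mul_left_cancel₀ hi1
  linear_combination (((k:ℚ)-1-i)*((k:ℚ)-1)*(Nat.choose (k-1) i : ℚ)) * h1 -
    (((m:ℚ)-i)*((k:ℚ)-1)*(Nat.choose m i : ℚ)) * h2

lemma batchB_diff (n : ℤ) (k m : ℕ) (hk : 2 ≤ k) (hkm : k < m) (i : ℕ) (hi : i ≤ k - 2) :
    batchB n k m i - batchB n k m (i + 1)
      = ((m : ℚ) - k) * (batchU m k i - n) / ((m : ℚ) - k + 1) := by
  have hden : ((m:ℚ) - k + 1) ≠ 0 := by
    have : (k:ℚ) < m := by exact_mod_cast hkm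
    nlinarith
  have hrel := batchU_rel k m hk hkm i hi
  unfold batchB
  field_simp
  push_cast
  linear_combination hrel

lemma batchU_pos (k m : ℕ) (hk : 2 ≤ k) (hkm : k < m) (i : ℕ) (hi : i ≤ k - 1) :
    0 < batchU m k i := by
  unfold batchU
  have h1 : (0:ℚ) < (k:ℚ) - 1 := by
    have : (2:ℚ) ≤ k := by exact_mod_cast hk
    linarith
  have h2 : (0:ℚ) < (Nat.choose m i : ℚ) := by
    exact_mod_cast Nat.choose_pos (by omega : i ≤ m)
  have h3 : (0:ℚ) < (Nat.choose (k-1) i : ℚ) := by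
    exact_mod_cast Nat.choose_pos hi
  positivity

lemma batchU_lt_succ (k m : ℕ) (hk : 2 ≤ k) (hkm : k < m) (i : ℕ) (hi : i ≤ k - 2) :
    batchU m k i < batchU m k (i+1) := by
  have hrel := batchU_rel k m hk hkm i hi
  have hpos := batchU_pos k m hk hkm i (by omega)
  have hc : (0:ℚ) < (k:ℚ) - 1 - i := by
    have h1 : ((i:ℕ):ℚ) ≤ ((k-2:ℕ):ℚ) := by exact_mod_cast hi
    have h2 : ((k - 2 : ℕ):ℚ) = (k:ℚ) - 2 := by rw [Nat.cast_sub (by omega)]; norm_num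
    rw [h2] at h1
    linarith
  have hmk : (k:ℚ) < m := by exact_mod_cast hkm
  nlinarith [hrel, hpos, hc, hmk]

lemma batchU_mono (k m : ℕ) (hk : 2 ≤ k) (hkm : k < m) {i j : ℕ} (hij : i ≤ j)
    (hj : j ≤ k - 1) : batchU m k i ≤ batchU m k j := by
  induction j with
  | zero => simp [Nat.le_zero.mp hij]
  | succ j ih =>
    rcases Nat.lt_or_ge i (j+1) with h | h
    · have h1 : batchU m k i ≤ batchU m k j := ih (by omega) (by omega)
      have h2 := batchU_lt_succ k m hk hkm j (by omega)
      linarith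
    · have : i = j + 1 := by omega
      simp [this]

/-- For `m > k ≥ 2` and integer `n`: the difference `b(n,k,m,i) - b(n,k,m,i+1)` equals
`(m-k)(U_{m,k,i} - n)/(m-k+1)` for `1 ≤ i ≤ k-2`; consequently, if `c` with
`1 ≤ c ≤ k-1` is least such that `n ≤ U_{m,k,c}`, then `b(n,k,m,i)` is maximized over
`1 ≤ i ≤ k-1` at `i = c`. -/
theorem batchB_max_at_least_c (n : ℤ) (k m : ℕ) (hk : 2 ≤ k) (hkm : k < m) :
    (∀ i : ℕ, 1 ≤ i → i ≤ k - 2 →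
        batchB n k m i - batchB n k m (i + 1)
          = ((m : ℚ) - k) * (batchU m k i - n) / ((m : ℚ) - k + 1)) ∧
    (∀ c : ℕ, 1 ≤ c → c ≤ k - 1 → (n : ℚ) ≤ batchU m k c →
        (∀ c', 1 ≤ c' → c' < c → ¬ ((n : ℚ) ≤ batchU m k c')) →
        ∀ i : ℕ, 1 ≤ i → i ≤ k - 1 → batchB n k m i ≤ batchB n k m c) := by
  have hmk : (k:ℚ) < m := by exact_mod_cast hkm
  have hden : (0:ℚ) < (m:ℚ) - k + 1 := by linarith
  constructor
  · intro i _ hi; exact batchB_diff n k m hk hkm i hi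
  · intro c hc1 hc2 hnc hmin i hi1 hi2
    rcases Nat.lt_or_ge i c with hic | hic
    · -- i < c : batchB increases from i up to c
      have key : ∀ d j : ℕ, 1 ≤ j → j + d = c → batchB n k m j ≤ batchB n k m c := by
        intro d
        induction d with
        | zero => intro j _ hj; simp [show j = c by omega]
        | succ d ih =>
          intro j hj1 hjd
          have hjc : j < c := by omega
          have hUj : batchU m k j < n := by
            have := hmin j hj1 hjc
            linarith [lt_of_not_ge this]
          have hdiff := batchB_diff n k m hk hkm j (by omega)
          have hneg : batchB n k m j - batchB n k m (j+1) < 0 := by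
            rw [hdiff]
            apply div_neg_of_neg_of_pos _ hden
            have : (0:ℚ) < (m:ℚ) - k := by linarith
            nlinarith
          have := ih (j+1) (by omega) (by omega)
          linarith
      exact key (c - i) i hi1 (by omega)
    · -- c ≤ i : batchB decreases from c up to i
      have key : ∀ j : ℕ, c ≤ j → j ≤ k - 1 → batchB n k m j ≤ batchB n k m c := by
        intro j hcj
        induction j, hcj using Nat.le_induction with
        | base => intro _; rfl
        | succ j hcj ih =>
          intro hjk
          have hUj : (n:ℚ) ≤ batchU m k j :=
            le_trans hnc (batchU_mono k m hk hkm hcj (by omega))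
          have hdiff := batchB_diff n k m hk hkm j (by omega)
          have hpos : 0 ≤ batchB n k m j - batchB n k m (j+1) := by
            rw [hdiff]
            apply div_nonneg _ (le_of_lt hden)
            have : (0:ℚ) ≤ (m:ℚ) - k := by linarith
            nlinarith
          have := ih (by omega)
          linarith
      exact key i hic hi2
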